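/- Let M : ℕ → Type be a family of partial orders and f : ∀ i, M i → M (i+1) a family of monotone maps, let L n be the concrete lax sum of M 0 → ... → M n, let ι_n : M n → L n be x ↦ (n, x), let f'_n : L n → L (n+1) be (j, x) ↦ (j, x), and ι_{n+1} : M (n+1) → L (n+1) be x ↦ (n+1, x). Then the square (ι_n, f_n, f'_n, ι_{n+1}) is a lax pushout, i.e.: (i) f'_n is monotone, order-reflecting, and has down-closed image; (ii) ι_{n+1} is monotone and order-reflecting; (iii) the images of f'_n and ι_{n+1} are disjoint and their union is all of L (n+1); and (iv) for every a ∈ L n and b ∈ M (n+1), f'_n(a) ≤ ι_{n+1}(b) holds if and only if there exists c ∈ M n with a ≤ ι_n(c) and f_n(c) ≤ b. -/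
import Mathlib


/-- The composite `F_{j,l} = f_{l-1} ∘ ⋯ ∘ f_j : M j → M l` (identity when `j = l`). -/
def laxF {M : ℕ → Type} (f : ∀ i, M i → M (i + 1)) (j : ℕ) (x : M j) :
    ∀ l, j ≤ l → M l
  | 0, h => (Nat.le_zero.mp h) ▸ x
  | l + 1, h =>
    if he : j = l + 1 then he ▸ x
    else f l (laxF f j x l (Nat.lt_succ_iff.mp (lt_of_le_of_ne h he)))

/-- The concrete lax sum of the sequence `M 0 → M 1 → ⋯ → M n`:
pairs `(j, x)` with `j ∈ Fin (n+1)` and `x ∈ M j`. -/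
abbrev LaxSum (M : ℕ → Type) (n : ℕ) : Type := Σ j : Fin (n + 1), M (j : ℕ)

/-- The lax sum order: `(j, x) ≤ (l, y)` iff `j ≤ l` and `F_{j,l}(x) ≤ y`. -/
def laxLE {M : ℕ → Type} [∀ i, PartialOrder (M i)] (f : ∀ i, M i → M (i + 1)) {n : ℕ}
    (a b : LaxSum M n) : Prop :=
  ∃ h : (a.1 : ℕ) ≤ (b.1 : ℕ), laxF f (a.1 : ℕ) a.2 (b.1 : ℕ) h ≤ b.2

/-- The canonical map `f'_n : L n → L (n+1)`, `(j, x) ↦ (j, x)`. -/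
def stepMap {M : ℕ → Type} {n : ℕ} (a : LaxSum M n) : LaxSum M (n + 1) :=
  ⟨⟨(a.1 : ℕ), Nat.lt_succ_of_lt a.1.isLt⟩, a.2⟩

/-- The canonical map `ι_j : M j → L n`, `x ↦ (j, x)`, for `j ≤ n`. -/
def laxIota {M : ℕ → Type} {n : ℕ} (j : ℕ) (h : j ≤ n) (x : M j) : LaxSum M n :=
  ⟨⟨j, Nat.lt_succ_of_le h⟩, x⟩


lemma laxF_self {M : ℕ → Type} (f : ∀ i, M i → M (i + 1)) (j : ℕ) (x : M j) (h : j ≤ j) :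
    laxF f j x j h = x := by
  cases j with
  | zero => rfl
  | succ l => simp [laxF]

lemma laxF_succ' {M : ℕ → Type} (f : ∀ i, M i → M (i + 1)) (j : ℕ) (x : M j) (l : ℕ)
    (h : j ≤ l + 1) (h' : j ≤ l) :
    laxF f j x (l + 1) h = f l (laxF f j x l h') := by
  have : j ≠ l + 1 := by omega
  simp [laxF, this]

/-- The square `(ι_n, f_n, f'_n, ι_{n+1})` built from the concrete lax sums is a lax
pushout: (i) `f'_n` is monotone, order-reflecting and has down-closed image;
(ii) `ι_{n+1}` is monotone and order-reflecting; (iii) the images of `f'_n` and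
`ι_{n+1}` are disjoint and cover `L (n+1)`; (iv) `f'_n a ≤ ι_{n+1} b` iff there is
`c ∈ M n` with `a ≤ ι_n c` and `f n c ≤ b`. -/
theorem stmt_18 (M : ℕ → Type) [∀ i, PartialOrder (M i)] (f : ∀ i, M i → M (i + 1))
    (hf : ∀ i, Monotone (f i)) (n : ℕ) :
    -- (i) f'_n monotone and order-reflecting …
    (∀ a b : LaxSum M n, laxLE f a b ↔ laxLE f (stepMap a) (stepMap b)) ∧
    -- … with down-closed image
    (∀ (a : LaxSum M n) (b : LaxSum M (n + 1)), laxLE f b (stepMap a) →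
        ∃ a' : LaxSum M n, b = stepMap a') ∧
    -- (ii) ι_{n+1} monotone and order-reflecting
    (∀ x y : M (n + 1),
        x ≤ y ↔ laxLE f (laxIota (n + 1) le_rfl x) (laxIota (n + 1) le_rfl y)) ∧
    -- (iii) images disjoint and covering
    (∀ (a : LaxSum M n) (c : M (n + 1)), stepMap a ≠ laxIota (n + 1) le_rfl c) ∧
    (∀ b : LaxSum M (n + 1), (∃ a : LaxSum M n, b = stepMap a) ∨
        (∃ c : M (n + 1), b = laxIota (n + 1) le_rfl c)) ∧
    -- (iv) the lax pushout comparison condition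
    (∀ (a : LaxSum M n) (b : M (n + 1)),
        laxLE f (stepMap a) (laxIota (n + 1) le_rfl b) ↔
          ∃ c : M n, laxLE f a (laxIota n le_rfl c) ∧ f n c ≤ b) := by
  refine ⟨?_, ?_, ?_, ?_, ?_, ?_⟩
  · intro a b; exact Iff.rfl
  · rintro ⟨⟨i, hi⟩, x⟩ ⟨⟨j, hj⟩, y⟩ ⟨h1, h2⟩
    simp only [stepMap] at h1 h2 ⊢
    have hjn : j < n + 1 := by omega
    exact ⟨⟨⟨j, hjn⟩, y⟩, rfl⟩
  · intro x y
    simp only [laxLE, laxIota]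
    constructor
    · intro h
      exact ⟨le_rfl, by rwa [laxF_self]⟩
    · rintro ⟨h1, h2⟩
      rwa [laxF_self] at h2
  · rintro ⟨⟨i, hi⟩, x⟩ c h
    have := congrArg (fun z : LaxSum M (n+1) => (z.1 : ℕ)) h
    simp [stepMap, laxIota] at this
    omega
  · rintro ⟨⟨j, hj⟩, y⟩
    by_cases hjn : j ≤ n
    · exact Or.inl ⟨⟨⟨j, by omega⟩, y⟩, rfl⟩
    · have hje : j = n + 1 := by omega
      subst hje
      exact Or.inr ⟨y, rfl⟩
  · rintro ⟨⟨i, hi⟩, x⟩ b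
    simp only [stepMap, laxIota, laxLE]
    have hin : i ≤ n := by omega
    constructor
    · rintro ⟨h1, h2⟩
      refine ⟨laxF f i x n hin, ⟨hin, le_rfl⟩, ?_⟩
      rwa [laxF_succ' f i x n h1 hin] at h2
    · rintro ⟨c, ⟨h1, h2⟩, h3⟩
      refine ⟨by omega, ?_⟩
      rw [laxF_succ' f i x n (by omega) hin]
      exact le_trans (hf n (le_trans (le_of_eq (by congr 1)) h2)) h3
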